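/- In the set-disjointness lower-bound graph G, if a_i ≠ b_j (the two ℓ-bit strings differ in at least one bit), then dist_G(u_i, v_j) = 2. -/
import Mathlib


namespace SetDisjointness

/-- Vertices of the set-disjointness lower-bound graph:
`uA i`, `vB j`, `wC m`, `xD m`, and the two special vertices `u*`, `v*`. -/
abbrev Vert (α β ℓ : ℕ) := (Fin α ⊕ Fin β) ⊕ ((Fin ℓ ⊕ Fin ℓ) ⊕ Bool)

variable {α β ℓ : ℕ}

def uA (i : Fin α) : Vert α β ℓ := Sum.inl (Sum.inl i)
def vB (j : Fin β) : Vert α β ℓ := Sum.inl (Sum.inr j)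
def wC (m : Fin ℓ) : Vert α β ℓ := Sum.inr (Sum.inl (Sum.inl m))
def xD (m : Fin ℓ) : Vert α β ℓ := Sum.inr (Sum.inl (Sum.inr m))
def ustar : Vert α β ℓ := Sum.inr (Sum.inr false)
def vstar : Vert α β ℓ := Sum.inr (Sum.inr true)

/-- One direction of the edge relation of the set-disjointness lower-bound graph:
`u_i ~ w_m` iff the `m`-th bit of `a_i` is 1; `u_i ~ x_m` iff it is 0;
`v_j ~ w_m` iff the `m`-th bit of `b_j` is 0; `v_j ~ x_m` iff it is 1;
`u*` is adjacent to all of `V_A ∪ V_C ∪ V_D`; `v*` to all of `V_B ∪ V_C ∪ V_D`. -/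
def sdRel (a : Fin α → Fin ℓ → Bool) (b : Fin β → Fin ℓ → Bool) :
    Vert α β ℓ → Vert α β ℓ → Prop
  | Sum.inl (Sum.inl i), Sum.inr (Sum.inl (Sum.inl m)) => a i m = true
  | Sum.inl (Sum.inl i), Sum.inr (Sum.inl (Sum.inr m)) => a i m = false
  | Sum.inl (Sum.inr j), Sum.inr (Sum.inl (Sum.inl m)) => b j m = false
  | Sum.inl (Sum.inr j), Sum.inr (Sum.inl (Sum.inr m)) => b j m = true
  | Sum.inr (Sum.inr false), Sum.inl (Sum.inl _) => True
  | Sum.inr (Sum.inr false), Sum.inr (Sum.inl _) => True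
  | Sum.inr (Sum.inr true), Sum.inl (Sum.inr _) => True
  | Sum.inr (Sum.inr true), Sum.inr (Sum.inl _) => True
  | _, _ => False

/-- The set-disjointness lower-bound graph. -/
def SDGraph (a : Fin α → Fin ℓ → Bool) (b : Fin β → Fin ℓ → Bool) :
    SimpleGraph (Vert α β ℓ) :=
  SimpleGraph.fromRel (sdRel a b)

/-- If the bit strings `a_i` and `b_j` differ, then `dist_G(u_i, v_j) = 2`. -/
theorem sd_dist_eq_two (hl : 1 ≤ ℓ) (a : Fin α → Fin ℓ → Bool)
    (b : Fin β → Fin ℓ → Bool) (i : Fin α) (j : Fin β) (hij : a i ≠ b j) :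
    (SDGraph a b).dist (uA i) (vB j) = 2 := by
  obtain ⟨m, hm⟩ := Function.ne_iff.mp hij
  obtain ⟨c, h1, h2⟩ : ∃ c, (SDGraph a b).Adj (uA i) c ∧ (SDGraph a b).Adj c (vB j) := by
    cases ha : a i m with
    | true =>
      have hb : b j m = false := by cases hb' : b j m <;> simp_all
      exact ⟨wC m,
        ⟨by simp [uA, wC], Or.inl (by simpa [uA, wC, sdRel] using ha)⟩,
        ⟨by simp [wC, vB], Or.inr (by simpa [wC, vB, sdRel] using hb)⟩⟩
    | false =>
      have hb : b j m = true := by cases hb' : b j m <;> simp_all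
      exact ⟨xD m,
        ⟨by simp [uA, xD], Or.inl (by simpa [uA, xD, sdRel] using ha)⟩,
        ⟨by simp [xD, vB], Or.inr (by simpa [xD, vB, sdRel] using hb)⟩⟩
  have hle : (SDGraph a b).dist (uA i) (vB j) ≤ 2 := by
    calc (SDGraph a b).dist (uA i) (vB j)
        ≤ ((h1.toWalk.append h2.toWalk)).length := SimpleGraph.dist_le _
      _ = 2 := by simp
  have hreach : (SDGraph a b).Reachable (uA i) (vB j) := ⟨h1.toWalk.append h2.toWalk⟩
  have hne : uA (β := β) (ℓ := ℓ) i ≠ vB j := by simp [uA, vB]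
  have hnadj : ¬ (SDGraph a b).Adj (uA i) (vB j) := by
    rintro ⟨-, h | h⟩ <;> simp [uA, vB, sdRel] at h
  have h0 : (SDGraph a b).dist (uA i) (vB j) ≠ 0 := fun h =>
    hne (hreach.dist_eq_zero_iff.mp h)
  have h1' : (SDGraph a b).dist (uA i) (vB j) ≠ 1 := fun h =>
    hnadj (SimpleGraph.dist_eq_one_iff_adj.mp h)
  omega

end SetDisjointness
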